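/- Let (S,·) be an arbitrary semigroup, let A ⊆ S be a SCR-set in S, and let l ∈ ℕ. Then the set D = {(a₁,a₂,d) ∈ S × S × S : for every t ∈ {1,2,...,l}, a₁·d^t·a₂ ∈ A} is a SCR-set in the semigroup S × S × S (with coordinatewise multiplication), where d^t denotes the t-fold product d·d···d. -/
import Mathlib


/-- `A` is a strong combinatorially rich set (SCR-set) in the semigroup `S`. -/
def IsSCRSet {S : Type*} [Semigroup S] (A : Set S) : Prop :=
  ∀ k : ℕ, ∃ r : ℕ, ∀ F : Finset (ℕ → S), F.card ≤ k →
    ∃ a₁ a₂ : S, ∃ t ≤ r, ∀ f ∈ F, a₁ * f t * a₂ ∈ A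

/-- `powSucc n d = d^(n+1)`, the `(n+1)`-fold product `d · d ⋯ d`. -/
def powSucc {S : Type*} [Semigroup S] : ℕ → S → S
  | 0, d => d
  | n + 1, d => powSucc n d * d

/-- If `A` is a SCR-set in a semigroup `S` and `l ∈ ℕ`, then
`D = {(a₁, a₂, d) : a₁ dᵗ a₂ ∈ A for all t ∈ {1, …, l}}` is a SCR-set in `S × S × S`. -/
theorem abundance_of_long_progressions_in_SCR_strong {S : Type*} [Semigroup S] (A : Set S)
    (hA : IsSCRSet A) (l : ℕ) :
    IsSCRSet {x : S × S × S | ∀ t : ℕ, t < l → x.1 * powSucc t x.2.2 * x.2.1 ∈ A} := by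
  classical
  -- S is nonempty, since hA produces elements of S
  obtain ⟨r₀, hr₀⟩ := hA 0
  obtain ⟨u, -, -⟩ := hr₀ ∅ (by simp)
  intro k
  obtain ⟨r, hr⟩ := hA (k * l)
  refine ⟨r, fun F hF => ?_⟩
  -- encode each (f, s) as a single S-valued sequence
  set g : (ℕ → S × S × S) → ℕ → ℕ → S :=
    fun f s n => (f n).1 * u * powSucc s (u * (f n).2.2 * u) * u * (f n).2.1 with hg
  set G : Finset (ℕ → S) := (F ×ˢ Finset.range l).image (fun p => g p.1 p.2) with hG
  have hGcard : G.card ≤ k * l := by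
    calc G.card ≤ (F ×ˢ Finset.range l).card := Finset.card_image_le
    _ = F.card * l := by simp [Finset.card_product]
    _ ≤ k * l := Nat.mul_le_mul_right l hF
  obtain ⟨a₁, a₂, t, ht, hmem⟩ := hr G hGcard
  refine ⟨(a₁, u, u), (u, a₂, u), t, ht, fun f hf => ?_⟩
  intro s hs
  have hgm : g f s ∈ G := Finset.mem_image.2
    ⟨(f, s), Finset.mem_product.2 ⟨hf, Finset.mem_range.2 hs⟩, rfl⟩
  have := hmem _ hgm
  simp only [hg] at this
  simpa [Prod.mul_def, mul_assoc] using this
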